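/- No minimally nonperfectly divisible 2P₃-free graph contains a clique cutset. -/

import Mathlib

open scoped Classical
set_option linter.unusedSectionVars false
set_option maxHeartbeats 1000000


open SimpleGraph

variable {V : Type}

/-- The clique number of the subgraph of `G` induced on `S`. -/
noncomputable def omegaOn (G : SimpleGraph V) (S : Set V) : ℕ :=
  sSup {n | ∃ s : Finset V, ↑s ⊆ S ∧ G.IsNClique n s}

/-- The subgraph of `G` induced on `S` is a perfect graph. -/
def IsPerfectOn (G : SimpleGraph V) (S : Set V) : Prop :=
  ∀ T : Set V, T ⊆ S → (G.induce T).chromaticNumber = (omegaOn G T : ℕ∞)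

/-- Every nonempty induced subgraph of `G[S]` admits a perfect division. -/
def PerfDivOn (G : SimpleGraph V) (S : Set V) : Prop :=
  ∀ H : Set V, H ⊆ S → H.Nonempty →
    ∃ A B : Set V, A ∪ B = H ∧ Disjoint A B ∧
      IsPerfectOn G A ∧ omegaOn G B < omegaOn G H

/-- `G` is minimally nonperfectly divisible. -/
def MNPD (G : SimpleGraph V) : Prop :=
  ¬ PerfDivOn G Set.univ ∧ ∀ S : Set V, S ≠ Set.univ → PerfDivOn G S

/-- The external neighbourhood `N(X)`. -/
def extNbhd (G : SimpleGraph V) (X : Set V) : Set V :=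
  {v | v ∉ X ∧ ∃ x ∈ X, G.Adj v x}

/-- `G` has no induced copy of `2P₃`. -/
def TwoP3Free (G : SimpleGraph V) : Prop :=
  ¬ ∃ a b c d e f : V, [a, b, c, d, e, f].Nodup ∧
    G.Adj a b ∧ G.Adj b c ∧ ¬ G.Adj a c ∧
    G.Adj d e ∧ G.Adj e f ∧ ¬ G.Adj d f ∧
    ¬ G.Adj a d ∧ ¬ G.Adj a e ∧ ¬ G.Adj a f ∧
    ¬ G.Adj b d ∧ ¬ G.Adj b e ∧ ¬ G.Adj b f ∧
    ¬ G.Adj c d ∧ ¬ G.Adj c e ∧ ¬ G.Adj c f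


def GoodColor (G : SimpleGraph V) (T : Set V) (n : ℕ) : Prop :=
  ∃ f : V → ℕ, (∀ v ∈ T, f v < n) ∧ ∀ u ∈ T, ∀ v ∈ T, G.Adj u v → f u ≠ f v

section Basics
variable [Fintype V] {G : SimpleGraph V} {S T A X C : Set V}

lemma cliqueSet_bdd (G : SimpleGraph V) (S : Set V) :
    BddAbove {n | ∃ s : Finset V, ↑s ⊆ S ∧ G.IsNClique n s} := by
  refine ⟨Fintype.card V, fun n hn => ?_⟩
  obtain ⟨s, -, hs⟩ := hn
  rw [← hs.card_eq]
  exact Finset.card_le_card (Finset.subset_univ s) |>.trans_eq (Finset.card_univ)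

lemma cliqueSet_zero (G : SimpleGraph V) (S : Set V) :
    0 ∈ {n | ∃ s : Finset V, ↑s ⊆ S ∧ G.IsNClique n s} :=
  ⟨∅, by simp, by simp [isNClique_iff, SimpleGraph.IsClique]⟩

lemma exists_omega_clique (G : SimpleGraph V) (S : Set V) :
    ∃ s : Finset V, ↑s ⊆ S ∧ G.IsNClique (omegaOn G S) s :=
  Nat.sSup_mem ⟨0, cliqueSet_zero G S⟩ (cliqueSet_bdd G S)

lemma card_le_omegaOn {s : Finset V} (hsub : ↑s ⊆ S) (hcl : G.IsClique (↑s : Set V)) :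
    s.card ≤ omegaOn G S :=
  le_csSup (cliqueSet_bdd G S) ⟨s, hsub, hcl, rfl⟩

lemma omegaOn_mono (h : S ⊆ T) : omegaOn G S ≤ omegaOn G T :=
  csSup_le_csSup (cliqueSet_bdd G T) ⟨0, cliqueSet_zero G S⟩
    (fun n hn => by obtain ⟨s, hs, hc⟩ := hn; exact ⟨s, hs.trans h, hc⟩)

lemma GoodColor.mono {n m : ℕ} (h : GoodColor G T n) (hnm : n ≤ m) : GoodColor G T m := by
  obtain ⟨f, h1, h2⟩ := h
  exact ⟨f, fun v hv => lt_of_lt_of_le (h1 v hv) hnm, h2⟩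

lemma goodColor_colorable {n : ℕ} (h : GoodColor G T n) : (G.induce T).Colorable n := by
  obtain ⟨f, h1, h2⟩ := h
  exact ⟨Coloring.mk (fun v => ⟨f v.1, h1 v.1 v.2⟩)
    (fun {u v} hadj heq => h2 u.1 u.2 v.1 v.2 hadj (congrArg Fin.val heq))⟩

lemma colorable_goodColor {n : ℕ} (h : (G.induce T).Colorable n) : GoodColor G T n := by
  obtain ⟨c⟩ := h
  refine ⟨fun v => if hv : v ∈ T then (c ⟨v, hv⟩ : Fin n).val else 0, ?_, ?_⟩
  · intro v hv; simp only [dif_pos hv]; exact (c ⟨v, hv⟩).isLt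
  · intro u hu v hv hadj heq
    simp only [dif_pos hu, dif_pos hv] at heq
    exact c.valid (show (G.induce T).Adj ⟨u, hu⟩ ⟨v, hv⟩ from hadj) (Fin.val_injective heq)

lemma omegaOn_le_chrom (G : SimpleGraph V) (T : Set V) :
    (omegaOn G T : ℕ∞) ≤ (G.induce T).chromaticNumber := by
  obtain ⟨s, hsub, hcl⟩ := exists_omega_clique G T
  have hfinj : Function.Injective (fun x : {x // x ∈ s} => (⟨x.1, hsub x.2⟩ : T)) := by
    intro a b hab
    exact Subtype.ext (by have := congrArg Subtype.val hab; exact this)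
  set s' : Finset T := s.attach.map ⟨_, hfinj⟩ with hs'
  have hcard : s'.card = omegaOn G T := by
    rw [hs', Finset.card_map, Finset.card_attach, hcl.card_eq]
  have hclique : (G.induce T).IsClique (↑s' : Set T) := by
    intro x hx y hy hxy
    simp only [hs', Finset.coe_map, Finset.mem_coe, Set.mem_image] at hx hy
    obtain ⟨a, ha, rfl⟩ := hx
    obtain ⟨b, hb, rfl⟩ := hy
    have : (a.1 : V) ≠ b.1 := fun hh => hxy (by simp [Function.Embedding.coeFn_mk, Subtype.ext hh])
    exact hcl.isClique a.2 b.2 this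
  calc (omegaOn G T : ℕ∞) = (s'.card : ℕ∞) := by rw [hcard]
    _ ≤ (G.induce T).chromaticNumber := hclique.card_le_chromaticNumber

lemma isPerfectOn_of (hA : ∀ T ⊆ A, GoodColor G T (omegaOn G T)) : IsPerfectOn G A :=
  fun T hT => le_antisymm
    (chromaticNumber_le_iff_colorable.2 (goodColor_colorable (hA T hT)))
    (omegaOn_le_chrom G T)

lemma goodColor_of_perfect (h : IsPerfectOn G A) : ∀ T ⊆ A, GoodColor G T (omegaOn G T) :=
  fun T hT => colorable_goodColor (chromaticNumber_le_iff_colorable.1 (le_of_eq (h T hT)))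

lemma clique_goodColor (hX : G.IsClique X) : ∀ T ⊆ X, GoodColor G T (omegaOn G T) := by
  intro T hT
  have hTfin := Set.toFinite T
  set t := hTfin.toFinset with ht
  have htT : ↑t = T := hTfin.coe_toFinset
  have hcl : G.IsClique (↑t : Set V) := by rw [htT]; exact hX.subset hT
  have hcard : t.card ≤ omegaOn G T := card_le_omegaOn (by rw [htT]) hcl
  refine ⟨fun v => if hv : v ∈ t then (t.equivFin ⟨v, hv⟩ : Fin t.card).val else 0, ?_, ?_⟩
  · intro v hv
    have hv' : v ∈ t := hTfin.mem_toFinset.2 hv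
    simp only [dif_pos hv']
    exact lt_of_lt_of_le (t.equivFin ⟨v, hv'⟩).isLt hcard
  · intro u hu v hv hadj heq
    have hu' : u ∈ t := hTfin.mem_toFinset.2 hu
    have hv' : v ∈ t := hTfin.mem_toFinset.2 hv
    simp only [dif_pos hu', dif_pos hv'] at heq
    have := t.equivFin.injective (Fin.val_injective heq)
    exact hadj.ne (congrArg Subtype.val this)


lemma glue {A2 : Set V} (hX : G.IsClique X) (hC : G.IsClique C)
    (hXC : Disjoint X C) (hA2C : Disjoint A2 C)
    (hanti : ∀ c ∈ C, ∀ a ∈ A2, a ∉ X → ¬ G.Adj c a)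
    (hA : ∀ T' ⊆ A2, GoodColor G T' (omegaOn G T')) :
    ∀ T ⊆ A2 ∪ C, GoodColor G T (omegaOn G T) := by
  intro T hT
  set m := omegaOn G T with hm
  set P : Set V := T ∩ A2 with hP
  have hPT : P ⊆ T := Set.inter_subset_left
  have hPA : P ⊆ A2 := Set.inter_subset_right
  obtain ⟨f, hfb, hfp⟩ := (hA P hPA).mono (omegaOn_mono hPT)
  set L : Finset V := (Set.toFinite (T ∩ X)).toFinset with hLdef
  set R : Finset V := (Set.toFinite (T ∩ C)).toFinset with hRdef
  have hmemL : ∀ v, v ∈ L ↔ v ∈ T ∧ v ∈ X := fun v => by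
    rw [hLdef, Set.Finite.mem_toFinset]; exact Iff.rfl
  have hmemR : ∀ v, v ∈ R ↔ v ∈ T ∧ v ∈ C := fun v => by
    rw [hRdef, Set.Finite.mem_toFinset]; exact Iff.rfl
  have hLP : ∀ v ∈ L, v ∈ P := by
    intro v hv
    obtain ⟨hvT, hvX⟩ := (hmemL v).1 hv
    rcases hT hvT with h | h
    · exact ⟨hvT, h⟩
    · exact absurd h (Set.disjoint_left.1 hXC hvX)
  have hRnotP : ∀ v ∈ R, v ∉ P := by
    intro v hv hvP
    exact Set.disjoint_left.1 hA2C hvP.2 ((hmemR v).1 hv).2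
  have hTsplit : ∀ v ∈ T, v ∈ P ∨ v ∈ R := by
    intro v hv
    rcases hT hv with h | h
    · exact Or.inl ⟨hv, h⟩
    · exact Or.inr ((hmemR v).2 ⟨hv, h⟩)
  -- the bipartite complement between L and R
  set N : V → Finset V := fun l => R.filter (fun r => ¬ G.Adj l r) with hNdef
  set dfun : Finset V → ℕ := fun s => s.card - (s.biUnion N).card with hdfun
  set d : ℕ := L.powerset.sup dfun with hd
  -- f is injective on L
  have hfL : Set.InjOn f ↑L := by
    intro x hx y hy hxy
    by_contra hne
    have hxL := Finset.mem_coe.1 hx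
    have hyL := Finset.mem_coe.1 hy
    exact hfp x (hLP x hxL) y (hLP y hyL)
      (hX ((hmemL x).1 hxL).2 ((hmemL y).1 hyL).2 hne) hxy
  -- Hall's condition
  set t : {x // x ∈ L} → Finset (V ⊕ Fin d) :=
    fun l => ((N l.1).image Sum.inl) ∪ ((Finset.univ : Finset (Fin d)).image Sum.inr) with htdef
  have hall : ∀ s : Finset {x // x ∈ L}, s.card ≤ (s.biUnion t).card := by
    intro s
    rcases s.eq_empty_or_nonempty with rfl | ⟨l0, hl0⟩
    · simp
    set S : Finset V := s.image Subtype.val with hSdef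
    have hcS : S.card = s.card := Finset.card_image_of_injective s Subtype.val_injective
    have hSL : S ⊆ L := by
      intro x hx
      obtain ⟨a, _, rfl⟩ := Finset.mem_image.1 hx
      exact a.2
    have hsub : ((S.biUnion N).image Sum.inl) ∪
        ((Finset.univ : Finset (Fin d)).image Sum.inr) ⊆ s.biUnion t := by
      intro x hx
      rcases Finset.mem_union.1 hx with hx | hx
      · obtain ⟨y, hy, rfl⟩ := Finset.mem_image.1 hx
        obtain ⟨l, hlS, hyN⟩ := Finset.mem_biUnion.1 hy
        obtain ⟨l', hl's, rfl⟩ := Finset.mem_image.1 hlS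
        exact Finset.mem_biUnion.2 ⟨l', hl's,
          Finset.mem_union_left _ (Finset.mem_image_of_mem _ hyN)⟩
      · obtain ⟨k, -, rfl⟩ := Finset.mem_image.1 hx
        exact Finset.mem_biUnion.2 ⟨l0, hl0,
          Finset.mem_union_right _ (Finset.mem_image_of_mem _ (Finset.mem_univ k))⟩
    have hdisj : Disjoint ((S.biUnion N).image Sum.inl)
        ((Finset.univ : Finset (Fin d)).image Sum.inr) := by
      simp [Finset.disjoint_left]
    have hcard : (((S.biUnion N).image Sum.inl) ∪
        ((Finset.univ : Finset (Fin d)).image Sum.inr)).card = (S.biUnion N).card + d := by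
      rw [Finset.card_union_of_disjoint hdisj,
        Finset.card_image_of_injective _ Sum.inl_injective,
        Finset.card_image_of_injective _ Sum.inr_injective, Finset.card_univ,
        Fintype.card_fin]
    have hds : dfun S ≤ d := Finset.le_sup (Finset.mem_powerset.2 hSL)
    have hle : S.card ≤ (S.biUnion N).card + d := by
      simp only [hdfun] at hds; omega
    calc s.card = S.card := hcS.symm
      _ ≤ (S.biUnion N).card + d := hle
      _ = _ := hcard.symm
      _ ≤ (s.biUnion t).card := Finset.card_le_card hsub
  obtain ⟨F, hFinj, hFmem⟩ := (Finset.all_card_le_biUnion_card_iff_exists_injective t).1 hall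
  have hFcases : ∀ l : {x // x ∈ L}, (∃ r, r ∈ N l.1 ∧ F l = Sum.inl r) ∨ (∃ k, F l = Sum.inr k) := by
    intro l
    rcases Finset.mem_union.1 (hFmem l) with h | h
    · obtain ⟨r, hr, heq⟩ := Finset.mem_image.1 h
      exact Or.inl ⟨r, hr, heq.symm⟩
    · obtain ⟨k, -, heq⟩ := Finset.mem_image.1 h
      exact Or.inr ⟨k, heq.symm⟩
  set matched : V → Prop := fun r => ∃ l : {x // x ∈ L}, F l = Sum.inl r with hmatched
  set matchedR : Finset V := R.filter matched with hmatchedR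
  set U : Finset V := R.filter (fun r => ¬ matched r) with hU
  have hRsplit : matchedR.card + U.card = R.card :=
    Finset.card_filter_add_card_filter_not (fun r => matched r)
  set Lin : Finset {x // x ∈ L} := Finset.univ.filter (fun l => ∃ r, F l = Sum.inl r) with hLin
  set Lout : Finset {x // x ∈ L} := Finset.univ.filter (fun l => ¬ ∃ r, F l = Sum.inl r) with hLout
  have hLsplit : Lin.card + Lout.card = L.card := by
    rw [hLin, hLout, Finset.card_filter_add_card_filter_not, Finset.card_univ,
      Fintype.card_coe]
  have hLinle : Lin.card ≤ matchedR.card := by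
    set g : {x // x ∈ L} → V := fun l => Sum.elim id (fun _ => l.1) (F l) with hg
    have himg : Lin.image g ⊆ matchedR := by
      intro x hx
      obtain ⟨l, hl, rfl⟩ := Finset.mem_image.1 hx
      obtain ⟨r, hreq⟩ := (Finset.mem_filter.1 hl).2
      have hgl : g l = r := by rw [hg]; simp [hreq]
      rcases hFcases l with ⟨r', hr'N, heq⟩ | ⟨k, heq⟩
      · have : r' = r := by rw [heq] at hreq; exact Sum.inl_injective hreq
        subst this
        rw [hgl]
        exact Finset.mem_filter.2 ⟨Finset.filter_subset _ _ hr'N, ⟨l, hreq⟩⟩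
      · rw [heq] at hreq; exact absurd hreq (by simp)
    have hinjOn : Set.InjOn g ↑Lin := by
      intro a ha b hb hab
      obtain ⟨ra, hra⟩ := (Finset.mem_filter.1 (Finset.mem_coe.1 ha)).2
      obtain ⟨rb, hrb⟩ := (Finset.mem_filter.1 (Finset.mem_coe.1 hb)).2
      have h1 : g a = ra := by rw [hg]; simp [hra]
      have h2 : g b = rb := by rw [hg]; simp [hrb]
      apply hFinj
      rw [hra, hrb, ← h1, ← h2, hab]
    calc Lin.card = (Lin.image g).card := (Finset.card_image_of_injOn hinjOn).symm
      _ ≤ matchedR.card := Finset.card_le_card himg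
  have hLoutle : Lout.card ≤ d := by
    set g' : {x // x ∈ L} → ℕ := fun l => Sum.elim (fun _ => 0) Fin.val (F l) with hg'
    have himg : Lout.image g' ⊆ Finset.range d := by
      intro x hx
      obtain ⟨l, hl, rfl⟩ := Finset.mem_image.1 hx
      rcases hFcases l with ⟨r, -, heq⟩ | ⟨k, heq⟩
      · exact absurd ⟨r, heq⟩ (Finset.mem_filter.1 hl).2
      · have : g' l = k.val := by rw [hg']; simp [heq]
        rw [this]; exact Finset.mem_range.2 k.isLt
    have hinjOn : Set.InjOn g' ↑Lout := by
      intro a ha b hb hab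
      rcases hFcases a with ⟨r, -, heq⟩ | ⟨ka, heqa⟩
      · exact absurd ⟨r, heq⟩ (Finset.mem_filter.1 (Finset.mem_coe.1 ha)).2
      rcases hFcases b with ⟨r, -, heq⟩ | ⟨kb, heqb⟩
      · exact absurd ⟨r, heq⟩ (Finset.mem_filter.1 (Finset.mem_coe.1 hb)).2
      have h1 : g' a = ka.val := by rw [hg']; simp [heqa]
      have h2 : g' b = kb.val := by rw [hg']; simp [heqb]
      apply hFinj
      rw [heqa, heqb]
      congr 1
      exact Fin.val_injective (by rw [← h1, ← h2, hab])
    calc Lout.card = (Lout.image g').card := (Finset.card_image_of_injOn hinjOn).symm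
      _ ≤ (Finset.range d).card := Finset.card_le_card himg
      _ = d := Finset.card_range d
  -- the clique bound : R.card + d ≤ m
  have hRCset : ↑R ⊆ C := fun v hv => ((hmemR v).1 (Finset.mem_coe.1 hv)).2
  have hRT : ↑R ⊆ T := fun v hv => ((hmemR v).1 (Finset.mem_coe.1 hv)).1
  have hRd : R.card + d ≤ m := by
    obtain ⟨Sstar, hSmem, hSsup⟩ := Finset.exists_mem_eq_sup L.powerset
      ⟨∅, Finset.empty_mem_powerset L⟩ dfun
    have hSsub : Sstar ⊆ L := Finset.mem_powerset.1 hSmem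
    by_cases hd0 : d = 0
    · have : R.card ≤ m := card_le_omegaOn hRT (hC.subset hRCset)
      omega
    · set NS : Finset V := Sstar.biUnion N with hNS
      have hNSR : NS ⊆ R := by
        intro x hx
        obtain ⟨l, -, hxl⟩ := Finset.mem_biUnion.1 hx
        exact Finset.filter_subset _ _ hxl
      have hdval : d = Sstar.card - NS.card := by rw [hd, hSsup]
      have hNSlt : NS.card < Sstar.card := by omega
      set W : Finset V := Sstar ∪ (R \ NS) with hW
      have hdisjW : Disjoint Sstar (R \ NS) := by
        refine Finset.disjoint_left.2 fun x hx1 hx2 => ?_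
        have hxX : x ∈ X := ((hmemL x).1 (hSsub hx1)).2
        have hxC : x ∈ C := hRCset (Finset.mem_coe.2 (Finset.mem_sdiff.1 hx2).1)
        exact Set.disjoint_left.1 hXC hxX hxC
      have hWT : ↑W ⊆ T := by
        intro x hx
        rcases Finset.mem_union.1 (Finset.mem_coe.1 hx) with h | h
        · exact ((hmemL x).1 (hSsub h)).1
        · exact hRT (Finset.mem_coe.2 (Finset.mem_sdiff.1 h).1)
      have hWcl : G.IsClique (↑W : Set V) := by
        intro x hx y hy hxy
        have key : ∀ a b : V, a ∈ Sstar → b ∈ R \ NS → G.Adj a b := by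
          intro a b ha hb
          obtain ⟨hbR, hbNS⟩ := Finset.mem_sdiff.1 hb
          by_contra hnadj
          exact hbNS (Finset.mem_biUnion.2 ⟨a, ha, Finset.mem_filter.2 ⟨hbR, hnadj⟩⟩)
        rcases Finset.mem_union.1 (Finset.mem_coe.1 hx) with h1 | h1 <;>
          rcases Finset.mem_union.1 (Finset.mem_coe.1 hy) with h2 | h2
        · exact hX ((hmemL x).1 (hSsub h1)).2 ((hmemL y).1 (hSsub h2)).2 hxy
        · exact key x y h1 h2
        · exact (key y x h2 h1).symm
        · exact hC (hRCset (Finset.mem_coe.2 (Finset.mem_sdiff.1 h1).1))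
            (hRCset (Finset.mem_coe.2 (Finset.mem_sdiff.1 h2).1)) hxy
      have hWcard : W.card = Sstar.card + (R.card - NS.card) := by
        rw [hW, Finset.card_union_of_disjoint hdisjW, Finset.card_sdiff_of_subset hNSR]
      have hWm : W.card ≤ m := card_le_omegaOn hWT hWcl
      have hNSRcard : NS.card ≤ R.card := Finset.card_le_card hNSR
      omega
  -- fresh colors
  set FL : Finset ℕ := L.image f with hFL
  have hFLcard : FL.card = L.card := Finset.card_image_of_injOn hfL
  have hFLsub : FL ⊆ Finset.range m := by
    intro x hx
    obtain ⟨l, hl, rfl⟩ := Finset.mem_image.1 hx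
    exact Finset.mem_range.2 (hfb l (hLP l hl))
  set Fr : Finset ℕ := Finset.range m \ FL with hFr
  have hFrcard : Fr.card = m - L.card := by
    rw [hFr, Finset.card_sdiff_of_subset hFLsub, Finset.card_range, hFLcard]
  have hLm : L.card ≤ m := by omega
  have hUFr : U.card ≤ Fr.card := by omega
  obtain ⟨emb⟩ : Nonempty ({x // x ∈ U} ↪ {x // x ∈ Fr}) := by
    apply Function.Embedding.nonempty_of_card_le
    rwa [Fintype.card_coe, Fintype.card_coe]
  -- the final coloring
  set h : V → ℕ := fun v =>
    if hv : v ∈ P then f v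
    else if hu : v ∈ U then (emb ⟨v, hu⟩ : {x // x ∈ Fr}).1
    else if hmt : ∃ l : {x // x ∈ L}, F l = Sum.inl v then f (Classical.choose hmt).1
    else 0 with hhdef
  have hval_P : ∀ v ∈ P, h v = f v := fun v hv => dif_pos hv
  have hval_U : ∀ v, (hv : v ∈ U) → h v = (emb ⟨v, hv⟩ : {x // x ∈ Fr}).1 := by
    intro v hv
    have hvR : v ∈ R := Finset.filter_subset _ _ hv
    rw [hhdef]
    simp only [dif_neg (hRnotP v hvR), dif_pos hv]
  have hval_M : ∀ v, (hv : v ∈ R) → (hmt : matched v) →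
      h v = f (Classical.choose hmt).1 := by
    intro v hv hmt
    have hvnU : v ∉ U := by
      rw [hU]; intro hc; exact (Finset.mem_filter.1 hc).2 hmt
    rw [hhdef]
    simp only [dif_neg (hRnotP v hv), dif_neg hvnU, dif_pos hmt]
    exact dif_pos hmt
  -- properties of the chosen matching partner
  have hchoose : ∀ v, (hmt : matched v) → ((Classical.choose hmt).1 ∈ L ∧
      ¬ G.Adj (Classical.choose hmt).1 v) := by
    intro v hmt
    have hspec := Classical.choose_spec hmt
    set l := Classical.choose hmt
    rcases hFcases l with ⟨r, hrN, heq⟩ | ⟨k, heq⟩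
    · have : r = v := by rw [heq] at hspec; exact Sum.inl_injective hspec
      subst this
      exact ⟨l.2, (Finset.mem_filter.1 hrN).2⟩
    · rw [heq] at hspec; exact absurd hspec (by simp)
  -- membership in Fr means not in FL
  have hFrnFL : ∀ x : {y // y ∈ Fr}, (x : ℕ) ∉ FL := by
    intro x
    exact (Finset.mem_sdiff.1 x.2).2
  have hfFL : ∀ l ∈ L, f l ∈ FL := fun l hl => Finset.mem_image_of_mem f hl
  -- the bound
  have hbound : ∀ v ∈ T, h v < m := by
    intro v hv
    rcases hTsplit v hv with hvP | hvR
    · rw [hval_P v hvP]; exact hfb v hvP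
    · by_cases hmt : matched v
      · rw [hval_M v hvR hmt]
        exact hfb _ (hLP _ (hchoose v hmt).1)
      · have hvU : v ∈ U := Finset.mem_filter.2 ⟨hvR, hmt⟩
        rw [hval_U v hvU]
        exact Finset.mem_range.1 (Finset.mem_sdiff.1 (emb ⟨v, hvU⟩).2).1
  -- properness helper : u ∈ P, v ∈ R adjacent
  have fact2 : ∀ u v, u ∈ P → v ∈ R → G.Adj u v → h u ≠ h v := by
    intro u v huP hvR hadj
    have hvC : v ∈ C := hRCset hvR
    have huX : u ∈ X := by
      by_contra huX
      exact hanti v hvC u huP.2 huX hadj.symm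
    have huL : u ∈ L := (hmemL u).2 ⟨huP.1, huX⟩
    rw [hval_P u huP]
    by_cases hmt : matched v
    · rw [hval_M v hvR hmt]
      obtain ⟨hlL, hlnadj⟩ := hchoose v hmt
      set l := (Classical.choose hmt).1
      have hlne : l ≠ u := fun he => hlnadj (he ▸ hadj)
      exact (hfp l (hLP l hlL) u (hLP u huL)
        (hX ((hmemL l).1 hlL).2 huX hlne) ).symm
    · have hvU : v ∈ U := Finset.mem_filter.2 ⟨hvR, hmt⟩
      rw [hval_U v hvU]
      intro heq
      exact hFrnFL (emb ⟨v, hvU⟩) (heq ▸ hfFL u huL)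
  have fact3 : ∀ u v, u ∈ R → v ∈ R → G.Adj u v → h u ≠ h v := by
    intro u v huR hvR hadj
    by_cases hmu : matched u <;> by_cases hmv : matched v
    · rw [hval_M u huR hmu, hval_M v hvR hmv]
      have hne : Classical.choose hmu ≠ Classical.choose hmv := by
        intro he
        have h1 := Classical.choose_spec hmu
        have h2 := Classical.choose_spec hmv
        rw [he] at h1
        exact hadj.ne (Sum.inl_injective (h1.symm.trans h2))
      have hne' : (Classical.choose hmu).1 ≠ (Classical.choose hmv).1 :=
        fun he => hne (Subtype.ext he)
      exact hfp _ (hLP _ (hchoose u hmu).1) _ (hLP _ (hchoose v hmv).1)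
        (hX ((hmemL _).1 (hchoose u hmu).1).2 ((hmemL _).1 (hchoose v hmv).1).2 hne')
    · have hvU : v ∈ U := Finset.mem_filter.2 ⟨hvR, hmv⟩
      rw [hval_M u huR hmu, hval_U v hvU]
      intro heq
      exact hFrnFL (emb ⟨v, hvU⟩) (heq ▸ hfFL _ (hchoose u hmu).1)
    · have huU : u ∈ U := Finset.mem_filter.2 ⟨huR, hmu⟩
      rw [hval_U u huU, hval_M v hvR hmv]
      intro heq
      exact hFrnFL (emb ⟨u, huU⟩) (heq ▸ hfFL _ (hchoose v hmv).1)
    · have huU : u ∈ U := Finset.mem_filter.2 ⟨huR, hmu⟩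
      have hvU : v ∈ U := Finset.mem_filter.2 ⟨hvR, hmv⟩
      rw [hval_U u huU, hval_U v hvU]
      intro heq
      have : emb ⟨u, huU⟩ = emb ⟨v, hvU⟩ := Subtype.ext heq
      have : (⟨u, huU⟩ : {x // x ∈ U}) = ⟨v, hvU⟩ := emb.injective this
      exact hadj.ne (congrArg Subtype.val this)
  refine ⟨h, hbound, ?_⟩
  intro u hu v hv hadj
  rcases hTsplit u hu with huP | huR <;> rcases hTsplit v hv with hvP | hvR
  · rw [hval_P u huP, hval_P v hvP]; exact hfp u huP v hvP hadj
  · exact fact2 u v huP hvR hadj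
  · exact (fact2 v u hvP huR hadj.symm).symm
  · exact fact3 u v huR hvR hadj


end Basics

/-- The reachability component of `a` inside `G[Xᶜ]`, as a set of vertices of `V`. -/
def gcomp (G : SimpleGraph V) (X : Set V) (a : ↥(Xᶜ : Set V)) : Set V :=
  {w | ∃ h : w ∈ (Xᶜ : Set V), (G.induce (Xᶜ : Set V)).Reachable a ⟨w, h⟩}

section Comp
variable {G : SimpleGraph V} {X : Set V} {a : ↥(Xᶜ : Set V)}

lemma gcomp_sub : gcomp G X a ⊆ (Xᶜ : Set V) := fun _ hw => hw.1

lemma mem_gcomp_self : (a : V) ∈ gcomp G X a := ⟨a.2, Reachable.refl _⟩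

lemma gcomp_closed {w w' : V} (hw : w ∈ gcomp G X a) (hw' : w' ∈ (Xᶜ : Set V))
    (hadj : G.Adj w w') : w' ∈ gcomp G X a := by
  obtain ⟨hwX, hr⟩ := hw
  refine ⟨hw', hr.trans (Adj.reachable ?_)⟩
  exact hadj

lemma gcomp_anti {w w' : V} (hw : w ∈ gcomp G X a) (hw' : w' ∈ (Xᶜ : Set V))
    (hw'' : w' ∉ gcomp G X a) : ¬ G.Adj w w' :=
  fun hadj => hw'' (gcomp_closed hw hw' hadj)

lemma walk_P3 {W : Type} {H : SimpleGraph W} {x y : W} (w : H.Walk x y)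
    (hmin : ∀ w' : H.Walk x y, w.length ≤ w'.length) (hxy : x ≠ y)
    (hnadj : ¬ H.Adj x y) : ∃ b c, H.Adj x b ∧ H.Adj b c ∧ ¬ H.Adj x c ∧ x ≠ c := by
  cases w with
  | nil => exact absurd rfl hxy
  | @cons _ b _ h1 w1 =>
    cases w1 with
    | nil => exact absurd h1 hnadj
    | @cons _ c _ h2 w2 =>
      refine ⟨b, c, h1, h2, ?_, ?_⟩
      · intro hadj
        have := hmin (Walk.cons hadj w2)
        simp [Walk.length_cons] at this
      · intro he
        subst he
        have := hmin w2
        simp [Walk.length_cons] at this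

lemma exists_P3 (a : ↥(Xᶜ : Set V)) (hnc : ¬ G.IsClique (gcomp G X a)) :
    ∃ p q r : V, p ∈ gcomp G X a ∧ q ∈ gcomp G X a ∧ r ∈ gcomp G X a ∧
      G.Adj p q ∧ G.Adj q r ∧ ¬ G.Adj p r ∧ p ≠ r := by
  rw [SimpleGraph.isClique_iff, Set.Pairwise] at hnc
  push_neg at hnc
  obtain ⟨x, hx, y, hy, hxy, hnadj⟩ := hnc
  obtain ⟨hxX, hrx⟩ := id hx
  obtain ⟨hyX, hry⟩ := id hy
  have hre : (G.induce (Xᶜ : Set V)).Reachable ⟨x, hxX⟩ ⟨y, hyX⟩ := hrx.symm.trans hry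
  have hsetne : {n | ∃ w : (G.induce (Xᶜ : Set V)).Walk ⟨x, hxX⟩ ⟨y, hyX⟩, w.length = n}.Nonempty :=
    ⟨hre.some.length, hre.some, rfl⟩
  obtain ⟨w, hwlen⟩ := Nat.sInf_mem hsetne
  have hmin : ∀ w' : (G.induce (Xᶜ : Set V)).Walk ⟨x, hxX⟩ ⟨y, hyX⟩, w.length ≤ w'.length := by
    intro w'
    rw [hwlen]
    exact Nat.sInf_le ⟨w', rfl⟩
  have hxy' : (⟨x, hxX⟩ : ↥(Xᶜ : Set V)) ≠ ⟨y, hyX⟩ :=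
    fun he => hxy (congrArg Subtype.val he)
  have hnadj' : ¬ (G.induce (Xᶜ : Set V)).Adj ⟨x, hxX⟩ ⟨y, hyX⟩ := fun h => hnadj h
  obtain ⟨b, c, h1, h2, h3, h4⟩ := walk_P3 w hmin hxy' hnadj'
  have hbC : (b : V) ∈ gcomp G X a := gcomp_closed hx b.2 h1
  have hcC : (c : V) ∈ gcomp G X a := gcomp_closed hbC c.2 h2
  refine ⟨x, b, c, hx, hbC, hcC, h1, h2, ?_, ?_⟩
  · intro hadj
    exact h3 hadj
  · intro he
    exact h4 (Subtype.ext he)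


section Main
variable [Fintype V] {G : SimpleGraph V} {X : Set V}

lemma no_cutset_case (hG : MNPD G) (hXclique : G.IsClique X)
    (a b : ↥(Xᶜ : Set V)) (hab : ¬ (G.induce (Xᶜ : Set V)).Reachable a b)
    (hclA : G.IsClique (gcomp G X a)) : False := by
  set C : Set V := gcomp G X a with hCdef
  set D : Set V := (Xᶜ : Set V) \ C with hDdef
  have haC : (a : V) ∈ C := mem_gcomp_self
  have hbD : (b : V) ∈ D := by
    refine ⟨b.2, fun hbC => ?_⟩
    obtain ⟨h2, hr⟩ := hbC
    have heq : (⟨(b : V), h2⟩ : ↥(Xᶜ : Set V)) = b := Subtype.ext rfl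
    exact hab (heq ▸ hr)
  have hCX : Disjoint X C := Set.disjoint_left.2 fun x hx hxC => (gcomp_sub hxC) hx
  have hanti : ∀ c ∈ C, ∀ w ∈ D, ¬ G.Adj c w := fun c hc w hw => gcomp_anti hc hw.1 hw.2
  set S : Set V := X ∪ D with hSdef
  have hSC : ∀ v : V, v ∈ S ∨ v ∈ C := by
    intro v
    by_cases hvX : v ∈ X
    · exact Or.inl (Or.inl hvX)
    by_cases hvC : v ∈ C
    · exact Or.inr hvC
    · exact Or.inl (Or.inr ⟨hvX, hvC⟩)
  have hDC : Disjoint D C := Set.disjoint_left.2 fun x hx => hx.2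
  have hSdisjC : Disjoint S C := by
    rw [hSdef, Set.disjoint_union_left]
    exact ⟨hCX, hDC⟩
  have hdiv : ∃ A B : Set V, A ∪ B = Set.univ ∧ Disjoint A B ∧ IsPerfectOn G A ∧
      omegaOn G B < omegaOn G Set.univ := by
    by_cases homega : omegaOn G S < omegaOn G Set.univ
    · refine ⟨X ∪ C, D, ?_, ?_, ?_,
        lt_of_le_of_lt (omegaOn_mono (show D ⊆ S from Set.subset_union_right)) homega⟩
      · apply Set.eq_univ_of_forall
        intro v
        rcases hSC v with h | h
        · rcases h with h | h
          · exact Or.inl (Or.inl h)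
          · exact Or.inr h
        · exact Or.inl (Or.inr h)
      · rw [Set.disjoint_union_left]
        refine ⟨Set.disjoint_left.2 fun x hx hxD => hxD.1 hx, hDC.symm⟩
      · exact isPerfectOn_of (glue hXclique hclA hCX hCX
          (fun c _ w hwX hnX => absurd hwX hnX) (clique_goodColor hXclique))
    · have homegaS : omegaOn G S = omegaOn G Set.univ :=
        le_antisymm (omegaOn_mono (Set.subset_univ S)) (not_lt.1 homega)
      have hSne : S ≠ Set.univ := by
        intro he
        have haS : (a : V) ∈ S := he ▸ Set.mem_univ _
        rcases haS with h | h
        · exact a.2 h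
        · exact h.2 haC
      obtain ⟨A2, B2, hAB2, hdisj2, hperf2, homegaB2⟩ :=
        hG.2 S hSne S subset_rfl ⟨(b : V), Or.inr hbD⟩
      have hA2S : A2 ⊆ S := hAB2 ▸ Set.subset_union_left
      have hB2S : B2 ⊆ S := hAB2 ▸ Set.subset_union_right
      have hA2C : Disjoint A2 C := hSdisjC.mono_left hA2S
      refine ⟨A2 ∪ C, B2, ?_, ?_, ?_, ?_⟩
      · apply Set.eq_univ_of_forall
        intro v
        rcases hSC v with h | h
        · rw [← hAB2] at h
          rcases h with h | h
          · exact Or.inl (Or.inl h)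
          · exact Or.inr h
        · exact Or.inl (Or.inr h)
      · rw [Set.disjoint_union_left]
        exact ⟨hdisj2, (hSdisjC.symm).mono_right hB2S⟩
      · refine isPerfectOn_of (glue hXclique hclA hCX hA2C ?_ (goodColor_of_perfect hperf2))
        intro c hc w hw hwX
        refine hanti c hc w ?_
        rcases hA2S hw with h | h
        · exact absurd h hwX
        · exact h
      · rw [← homegaS]; exact homegaB2
  exact hG.1 (fun H _ hHne => by
    by_cases hHu : H = Set.univ
    · subst hHu; exact hdiv
    · exact hG.2 H hHu H subset_rfl hHne)

end Main

theorem stmt_16 [Fintype V] (G : SimpleGraph V) (hfree : TwoP3Free G)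
    (hG : MNPD G) (hc : G.Connected) :
    ¬ ∃ X : Set V, G.IsClique X ∧ ¬ (G.induce Xᶜ).Preconnected := by
  rintro ⟨X, hXclique, hnp⟩
  have hnp' : ∃ u v : ↥(Xᶜ : Set V), ¬ (G.induce (Xᶜ : Set V)).Reachable u v := by
    by_contra hcon
    push_neg at hcon
    exact hnp fun u v => hcon u v
  obtain ⟨u, v, huv⟩ := hnp'
  by_cases hclu : G.IsClique (gcomp G X u)
  · exact no_cutset_case hG hXclique u v huv hclu
  by_cases hclv : G.IsClique (gcomp G X v)
  · exact no_cutset_case hG hXclique v u (fun h => huv h.symm) hclv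
  obtain ⟨p, q, r, hpC, hqC, hrC, hpq, hqr, hpr, hprne⟩ := exists_P3 u hclu
  obtain ⟨s, t, w, hsC, htC, hwC, hst, htw, hsw, hswne⟩ := exists_P3 v hclv
  have hdisj : ∀ z, z ∈ gcomp G X v → z ∉ gcomp G X u := by
    intro z hzv hzu
    obtain ⟨h1, hr1⟩ := hzu
    obtain ⟨h2, hr2⟩ := hzv
    have heq : (⟨z, h1⟩ : ↥(Xᶜ : Set V)) = ⟨z, h2⟩ := rfl
    exact huv (hr1.trans (heq ▸ hr2.symm))
  have hcross : ∀ x ∈ gcomp G X u, ∀ y ∈ gcomp G X v, ¬ G.Adj x y := by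
    intro x hx y hy
    exact gcomp_anti hx (gcomp_sub hy) (hdisj y hy)
  have hnexy : ∀ x ∈ gcomp G X u, ∀ y ∈ gcomp G X v, x ≠ y :=
    fun x hx y hy he => hdisj y hy (he ▸ hx)
  apply hfree
  refine ⟨p, q, r, s, t, w, ?_, hpq, hqr, hpr, hst, htw, hsw,
    hcross p hpC s hsC, hcross p hpC t htC, hcross p hpC w hwC,
    hcross q hqC s hsC, hcross q hqC t htC, hcross q hqC w hwC,
    hcross r hrC s hsC, hcross r hrC t htC, hcross r hrC w hwC⟩
  simp only [List.nodup_cons, List.mem_cons, List.mem_singleton, List.not_mem_nil, or_false,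
    List.nodup_nil, and_true, not_or]
  exact ⟨⟨hpq.ne, hprne, hnexy p hpC s hsC, hnexy p hpC t htC, hnexy p hpC w hwC⟩,
    ⟨hqr.ne, hnexy q hqC s hsC, hnexy q hqC t htC, hnexy q hqC w hwC⟩,
    ⟨hnexy r hrC s hsC, hnexy r hrC t htC, hnexy r hrC w hwC⟩,
    ⟨hst.ne, hswne⟩, ⟨htw.ne, not_false⟩⟩
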